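/- Let ((ξ_q)_{q∈ℤ^d}, P_θ) be i.i.d. ℝ^d-valued random vectors with density N(d,θ)·exp(−|x|^θ), θ > 0, and let U ⊆ ℝ^d be a bounded open set with U^c (relative to a fixed large box) of finite Lebesgue measure. Then for every ε ∈ (0,1) there is a constant M₁(ε) < ∞ (independent of U) such that P_θ(for all q ∈ U^c ∩ ℤ^d, |ξ_q| > dist(q, ∂U)) ≤ M₁(ε)^{#(U^c ∩ ℤ^d)} · exp(−(1−ε) Σ_{q ∈ U^c ∩ ℤ^d} dist(q, ∂U)^θ). -/

import Mathlib

open MeasureTheory ProbabilityTheory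

open Real Set in
private lemma auxIoi {θ : ℝ} (hθ : 0 < θ) {b : ℝ} (hb : 0 < b) :
    IntegrableOn (fun x : ℝ => exp (-(b * x ^ θ))) (Ioi 0) := by
  have h1 : IntegrableOn (fun x : ℝ => exp (-(x ^ θ))) (Ioi 0) := by
    rw [← integrableOn_Ioi_comp_rpow_iff' (fun x : ℝ => exp (-(x ^ θ))) (inv_ne_zero hθ.ne')]
    refine (Real.GammaIntegral_convergent (by positivity : (0:ℝ) < θ⁻¹)).congr_fun
      (fun x hx => ?_) measurableSet_Ioi
    rw [smul_eq_mul, ← Real.rpow_mul (le_of_lt hx), inv_mul_cancel₀ hθ.ne', Real.rpow_one,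
      mul_comm]
  have h2 := (integrableOn_Ioi_comp_mul_left_iff (fun x : ℝ => exp (-(x ^ θ))) 0
    (a := b ^ θ⁻¹) (by positivity)).mpr (by simpa using h1)
  refine h2.congr_fun (fun x hx => ?_) measurableSet_Ioi
  dsimp only
  rw [Real.mul_rpow (by positivity) (le_of_lt hx), ← Real.rpow_mul hb.le,
    inv_mul_cancel₀ hθ.ne', Real.rpow_one]

open Real Set in
private lemma auxLine {θ : ℝ} (hθ : 0 < θ) {b : ℝ} (hb : 0 < b) :
    Integrable (fun x : ℝ => exp (-(b * |x| ^ θ))) := by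
  have hIoi : IntegrableOn (fun x : ℝ => exp (-(b * |x| ^ θ))) (Ioi 0) :=
    (auxIoi hθ hb).congr_fun (fun x hx => by rw [abs_of_pos hx]) measurableSet_Ioi
  have hIic : IntegrableOn (fun x : ℝ => exp (-(b * |x| ^ θ))) (Iic 0) := by
    rw [← Measure.map_neg_eq_self (volume : Measure ℝ)]
    have m : MeasurableEmbedding fun x : ℝ => -x := (Homeomorph.neg ℝ).measurableEmbedding
    rw [m.integrableOn_map_iff]
    simp_rw [Function.comp_def, abs_neg, neg_preimage, neg_Iic, neg_zero]
    exact (integrableOn_Ici_iff_integrableOn_Ioi).mpr hIoi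
  have := hIic.union hIoi
  rw [Iic_union_Ioi] at this
  exact integrableOn_univ.mp this

open Real Set in
private lemma auxEuclid (d : ℕ) (hd : 1 ≤ d) {θ : ℝ} (hθ : 0 < θ) {b : ℝ} (hb : 0 < b) :
    Integrable (fun x : EuclideanSpace ℝ (Fin d) => exp (-(b * ‖x‖ ^ θ))) := by
  have hmp := EuclideanSpace.volume_preserving_symm_measurableEquiv_toLp (Fin d)
  rw [← MeasurePreserving.integrable_comp_emb hmp.symm (MeasurableEquiv.measurableEmbedding _)]
  have hd' : (0:ℝ) < d := by exact_mod_cast hd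
  refine Integrable.mono' (g := fun x : Fin d → ℝ => ∏ i, exp (-(b / d * |x i| ^ θ)))
    (Integrable.fintype_prod (fun _ => auxLine hθ (by positivity))) ?_ ?_
  · refine StronglyMeasurable.aestronglyMeasurable ?_
    refine Continuous.stronglyMeasurable ?_ |>.comp_measurable
      (MeasurableEquiv.measurable _)
    exact Real.continuous_exp.comp
      (Continuous.neg (continuous_const.mul
        (continuous_norm.rpow_const fun x => Or.inr hθ.le)))
  · refine Filter.Eventually.of_forall (fun x => ?_)
    set y := (MeasurableEquiv.toLp 2 (Fin d → ℝ)) x with hy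
    have key : ∀ i, |x i| ≤ ‖y‖ := by
      intro i
      rw [EuclideanSpace.norm_eq, show |x i| = Real.sqrt (x i ^ 2) from
        (Real.sqrt_sq_eq_abs _).symm]
      apply Real.sqrt_le_sqrt
      have h1 := Finset.single_le_sum (f := fun j => ‖y j‖ ^ 2)
        (fun j _ => by positivity) (Finset.mem_univ i)
      simpa only [hy, MeasurableEquiv.coe_toLp, PiLp.toLp_apply, Real.norm_eq_abs, sq_abs] using h1
    simp only [Function.comp_apply, ← hy]
    rw [Real.norm_of_nonneg (Real.exp_pos _).le, ← Real.exp_sum]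
    apply Real.exp_le_exp.mpr
    rw [Finset.sum_neg_distrib, neg_le_neg_iff]
    calc ∑ i, b / d * |x i| ^ θ ≤ ∑ _i : Fin d, b / d * ‖y‖ ^ θ := by
          refine Finset.sum_le_sum (fun i _ => ?_)
          have h2 : |x i| ^ θ ≤ ‖y‖ ^ θ :=
            Real.rpow_le_rpow (abs_nonneg _) (key i) hθ.le
          exact mul_le_mul_of_nonneg_left h2 (by positivity)
      _ = b * ‖y‖ ^ θ := by
          rw [Finset.sum_const, Finset.card_univ, Fintype.card_fin, nsmul_eq_mul]
          field_simp

open Real Set in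
private lemma tail_bound (d : ℕ) (hd : 1 ≤ d) {θ : ℝ} (hθ : 0 < θ)
    {ε : ℝ} (hε0 : 0 < ε) (hε1 : ε < 1) {N : ℝ} (hN0 : 0 < N) {r : ℝ} (hr : 0 ≤ r) :
    (volume.withDensity fun x : EuclideanSpace ℝ (Fin d) =>
        ENNReal.ofReal (N * exp (-‖x‖ ^ θ))) {x | r < ‖x‖}
      ≤ ENNReal.ofReal ((N * ∫ x : EuclideanSpace ℝ (Fin d), exp (-(ε * ‖x‖ ^ θ)))
          * exp (-(1 - ε) * r ^ θ)) := by
  have hmeas : MeasurableSet {x : EuclideanSpace ℝ (Fin d) | r < ‖x‖} :=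
    measurableSet_lt measurable_const measurable_norm
  rw [withDensity_apply _ hmeas]
  set c := N * exp (-(1 - ε) * r ^ θ) with hc
  have hcpos : 0 < c := by positivity
  have hcont : Continuous fun x : EuclideanSpace ℝ (Fin d) => c * exp (-(ε * ‖x‖ ^ θ)) := by
    refine continuous_const.mul (Real.continuous_exp.comp (Continuous.neg
      (continuous_const.mul (continuous_norm.rpow_const fun x => Or.inr hθ.le))))
  have step1 : ∫⁻ x in {x : EuclideanSpace ℝ (Fin d) | r < ‖x‖},
        ENNReal.ofReal (N * exp (-‖x‖ ^ θ))
      ≤ ∫⁻ x in {x : EuclideanSpace ℝ (Fin d) | r < ‖x‖},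
        ENNReal.ofReal (c * exp (-(ε * ‖x‖ ^ θ))) := by
    refine setLIntegral_mono (hcont.measurable.ennreal_ofReal) (fun x hx => ?_)
    apply ENNReal.ofReal_le_ofReal
    rw [hc, mul_assoc, ← Real.exp_add]
    refine mul_le_mul_of_nonneg_left ?_ hN0.le
    apply Real.exp_le_exp.mpr
    have h1 : r ^ θ ≤ ‖x‖ ^ θ := Real.rpow_le_rpow hr (le_of_lt hx) hθ.le
    nlinarith [mul_le_mul_of_nonneg_left h1 (by linarith : (0:ℝ) ≤ 1 - ε)]
  have hint : Integrable (fun x : EuclideanSpace ℝ (Fin d) => c * exp (-(ε * ‖x‖ ^ θ))) :=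
    (auxEuclid d hd hθ hε0).const_mul c
  have step2 := setLIntegral_le_lintegral (μ := (volume : Measure (EuclideanSpace ℝ (Fin d))))
    {x : EuclideanSpace ℝ (Fin d) | r < ‖x‖}
    (fun x => ENNReal.ofReal (c * exp (-(ε * ‖x‖ ^ θ))))
  refine le_trans (le_trans step1 step2) (le_of_eq ?_)
  rw [← MeasureTheory.ofReal_integral_eq_lintegral_ofReal hint
      (Filter.Eventually.of_forall fun x => by positivity)]
  rw [MeasureTheory.integral_const_mul]
  congr 1
  ring


/-- Upper bound for the probability that all perturbations at lattice points of U^c exceed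
the distance to ∂U: for every ε ∈ (0,1) there is M₁(ε) < ∞, independent of U, with
P(∀ q ∈ U^c ∩ ℤ^d, |ξ_q| > dist(q,∂U)) ≤ M₁^{#(U^c∩ℤ^d)} exp(-(1-ε) Σ dist(q,∂U)^θ). -/
theorem emptiness_probability_upper_bound
    (d : ℕ) (hd : 1 ≤ d) (θ : ℝ) (hθ : 0 < θ)
    (Ω : Type) [MeasurableSpace Ω] (P : Measure Ω) [IsProbabilityMeasure P]
    (ξ : (Fin d → ℤ) → Ω → EuclideanSpace ℝ (Fin d)) (N : ℝ)
    (hN : N = (∫ x : EuclideanSpace ℝ (Fin d), Real.exp (-‖x‖ ^ θ))⁻¹)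
    (hInd : iIndepFun ξ P)
    (hLaw : ∀ q, Measure.map (ξ q) P
      = volume.withDensity fun x => ENNReal.ofReal (N * Real.exp (-‖x‖ ^ θ)))
    (emb : (Fin d → ℤ) → EuclideanSpace ℝ (Fin d)) (hemb : ∀ q i, emb q i = (q i : ℝ))
    (ε : ℝ) (hε : ε ∈ Set.Ioo (0:ℝ) 1) :
    ∃ M₁ : ℝ, 0 < M₁ ∧
      ∀ U : Set (EuclideanSpace ℝ (Fin d)), Bornology.IsBounded U → (frontier U).Nonempty →
      ∀ S : Finset (Fin d → ℤ), (∀ q ∈ S, emb q ∉ U) →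
        (P {ω | ∀ q ∈ S, Metric.infDist (emb q) (frontier U) < ‖ξ q ω‖}).toReal
          ≤ M₁ ^ S.card
            * Real.exp (-(1 - ε) * ∑ q ∈ S, Metric.infDist (emb q) (frontier U) ^ θ) := by
  obtain ⟨hε0, hε1⟩ := hε
  set J := ∫ x : EuclideanSpace ℝ (Fin d), Real.exp (-(ε * ‖x‖ ^ θ)) with hJ
  have hJnn : 0 ≤ J := integral_nonneg fun x => (Real.exp_pos _).le
  have hIint : Integrable (fun x : EuclideanSpace ℝ (Fin d) => Real.exp (-‖x‖ ^ θ)) := by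
    simpa only [one_mul] using auxEuclid d hd hθ one_pos
  have hvol : (volume : Measure (EuclideanSpace ℝ (Fin d))) ≠ 0 := by
    have hball := Metric.measure_ball_pos
      (volume : Measure (EuclideanSpace ℝ (Fin d))) (0 : EuclideanSpace ℝ (Fin d)) one_pos
    intro h0
    rw [h0] at hball
    simp at hball
  haveI : NeZero (volume : Measure (EuclideanSpace ℝ (Fin d))) := ⟨hvol⟩
  have hI0 : 0 < ∫ x : EuclideanSpace ℝ (Fin d), Real.exp (-‖x‖ ^ θ) := by
    rw [MeasureTheory.integral_pos_iff_support_of_nonneg_ae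
      (Filter.Eventually.of_forall fun x => (Real.exp_pos _).le) hIint]
    have hsupp : Function.support (fun x : EuclideanSpace ℝ (Fin d) => Real.exp (-‖x‖ ^ θ))
        = Set.univ := Set.eq_univ_iff_forall.mpr fun x => (Real.exp_pos _).ne'
    rw [hsupp]
    exact Measure.measure_univ_pos.mpr hvol
  have hN0 : 0 < N := hN ▸ inv_pos.mpr hI0
  refine ⟨max 1 (N * J), lt_of_lt_of_le one_pos (le_max_left _ _), ?_⟩
  intro U _hU _hfr S _hS
  set r : (Fin d → ℤ) → ℝ := fun q => Metric.infDist (emb q) (frontier U) with hrdef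
  have hr : ∀ q, 0 ≤ r q := fun q => Metric.infDist_nonneg
  set A : (Fin d → ℤ) → Set (EuclideanSpace ℝ (Fin d)) := fun q => {x | r q < ‖x‖} with hA
  have hAmeas : ∀ q, MeasurableSet (A q) :=
    fun q => measurableSet_lt measurable_const measurable_norm
  -- a.e. measurability of ξ q
  have hAE : ∀ q, AEMeasurable (ξ q) P := by
    intro q
    by_contra h
    have hmap := Measure.map_of_not_aemeasurable h
    rw [hLaw q] at hmap
    have h2 := congrArg (fun μ => μ Set.univ) hmap
    simp only [Measure.coe_zero, Pi.zero_apply] at h2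
    rw [withDensity_apply _ MeasurableSet.univ, Measure.restrict_univ] at h2
    have hmeas' : Measurable fun x : EuclideanSpace ℝ (Fin d) =>
        ENNReal.ofReal (N * Real.exp (-‖x‖ ^ θ)) := by
      refine Measurable.ennreal_ofReal (Continuous.measurable ?_)
      exact continuous_const.mul (Real.continuous_exp.comp (Continuous.neg
        (continuous_norm.rpow_const fun x => Or.inr hθ.le)))
    rw [lintegral_eq_zero_iff hmeas'] at h2
    obtain ⟨x, hx⟩ := h2.exists
    exact (ENNReal.ofReal_pos.mpr (by positivity)).ne' hx
  -- event set as intersection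
  have hset : {ω | ∀ q ∈ S, r q < ‖ξ q ω‖} = ⋂ q ∈ S, (ξ q) ⁻¹' (A q) := by
    ext ω
    simp [hA, Set.mem_iInter]
  have hprod : P {ω | ∀ q ∈ S, r q < ‖ξ q ω‖} = ∏ q ∈ S, P ((ξ q) ⁻¹' (A q)) := by
    rw [hset]
    exact hInd.meas_biInter fun q _ => ⟨A q, hAmeas q, rfl⟩
  have hfac : ∀ q ∈ S, (P ((ξ q) ⁻¹' (A q))).toReal
      ≤ max 1 (N * J) * Real.exp (-(1 - ε) * r q ^ θ) := by
    intro q _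
    have h1 : P ((ξ q) ⁻¹' (A q)) ≤ ENNReal.ofReal ((N * J) * Real.exp (-(1 - ε) * r q ^ θ)) := by
      rw [← Measure.map_apply_of_aemeasurable (hAE q) (hAmeas q), hLaw q]
      exact tail_bound d hd hθ hε0 hε1 hN0 (hr q)
    calc (P ((ξ q) ⁻¹' (A q))).toReal
        ≤ (ENNReal.ofReal ((N * J) * Real.exp (-(1 - ε) * r q ^ θ))).toReal :=
          ENNReal.toReal_mono ENNReal.ofReal_ne_top h1
      _ = (N * J) * Real.exp (-(1 - ε) * r q ^ θ) :=
          ENNReal.toReal_ofReal (by positivity)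
      _ ≤ max 1 (N * J) * Real.exp (-(1 - ε) * r q ^ θ) :=
          mul_le_mul_of_nonneg_right (le_max_right _ _) (Real.exp_nonneg _)
  calc (P {ω | ∀ q ∈ S, r q < ‖ξ q ω‖}).toReal
      = ∏ q ∈ S, (P ((ξ q) ⁻¹' (A q))).toReal := by rw [hprod, ENNReal.toReal_prod]
    _ ≤ ∏ q ∈ S, (max 1 (N * J) * Real.exp (-(1 - ε) * r q ^ θ)) :=
        Finset.prod_le_prod (fun q _ => ENNReal.toReal_nonneg) hfac
    _ = (max 1 (N * J)) ^ S.card * Real.exp (-(1 - ε) * ∑ q ∈ S, r q ^ θ) := by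
        rw [Finset.prod_mul_distrib, Finset.prod_const, Finset.mul_sum, Real.exp_sum]
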